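/- Let C ⊂ ℝ^d be a finite regular convex independent set. Then there exist a convex cap C_A ⊆ C and a convex cup C_B ⊆ C such that C_A ∪ C_B = C and C_A ∩ C_B = ∂_π C. -/

import Mathlib

open scoped BigOperators ENNReal

noncomputable section

/-- The projection `π : ℝ^d → ℝ^{d−1}` forgetting the last coordinate. -/
def proj {d : ℕ} (x : EuclideanSpace ℝ (Fin d)) : EuclideanSpace ℝ (Fin (d - 1)) :=
  WithLp.toLp 2 (fun i => x (Fin.castLE (Nat.sub_le d 1) i))

/-- The height `h(x) = x_d`, the last coordinate of `x ∈ ℝ^d` (junk value `0` for `d = 0`). -/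
def hCoord {d : ℕ} (x : EuclideanSpace ℝ (Fin d)) : ℝ :=
  if h : 0 < d then x ⟨d - 1, by omega⟩ else 0

/-- The first coordinate of `x ∈ ℝ^d` (junk value `0` for `d = 0`). -/
def firstCoord {d : ℕ} (x : EuclideanSpace ℝ (Fin d)) : ℝ :=
  if h : 0 < d then x ⟨0, h⟩ else 0

/-- A set `Q ⊆ ℝ^m` is in affinely general position if any `m+1` of its points are
affinely independent. -/
def AffGenPos {m : ℕ} (Q : Set (EuclideanSpace ℝ (Fin m))) : Prop :=
  ∀ s : Finset (EuclideanSpace ℝ (Fin m)), ↑s ⊆ Q → s.card = m + 1 →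
    AffineIndependent ℝ (fun x : s => (x : EuclideanSpace ℝ (Fin m)))

/-- A set `Q ⊆ ℝ^d` is convex independent if it is in general position and no point of `Q`
lies in the convex hull of the other points of `Q`. -/
def ConvIndep {d : ℕ} (Q : Set (EuclideanSpace ℝ (Fin d))) : Prop :=
  AffGenPos Q ∧ ∀ q ∈ Q, q ∉ convexHull ℝ (Q \ {q})

/-- A finite set `P ⊆ ℝ^d` is regular if (R1) the projection of `P` to each coordinate axis is
injective; (R2) `π(P)` is in affinely general position in `ℝ^{d−1}`; (R3) for every generic pair
`(S, T)` of `P` (disjoint nonempty subsets with `|S| + |T| = d + 1`), the affine spans of `π(S)`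
and `π(T)` intersect in exactly one point. -/
def Regular {d : ℕ} (P : Set (EuclideanSpace ℝ (Fin d))) : Prop :=
  (∀ i : Fin d, Set.InjOn (fun p : EuclideanSpace ℝ (Fin d) => p i) P) ∧
  AffGenPos (proj '' P) ∧
  (∀ S T : Finset (EuclideanSpace ℝ (Fin d)), ↑S ⊆ P → ↑T ⊆ P → Disjoint S T →
    S.Nonempty → T.Nonempty → S.card + T.card = d + 1 →
    ∃! q : EuclideanSpace ℝ (Fin (d - 1)),
      q ∈ affineSpan ℝ (proj '' (S : Set (EuclideanSpace ℝ (Fin d)))) ∧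
      q ∈ affineSpan ℝ (proj '' (T : Set (EuclideanSpace ℝ (Fin d)))))

/-- `A` is high above `B` if `A`, `B` are disjoint, `A ∪ B` is regular, and for every generic pair
`(S, T)` of `A ∪ B` with `S ⊆ A`, `T ⊆ B`, the points `s ∈ aff S`, `t ∈ aff T` with
`π(s) = π(t)` satisfy `h(s) > h(t)`. -/
def HighAbove {d : ℕ} (A B : Set (EuclideanSpace ℝ (Fin d))) : Prop :=
  Disjoint A B ∧ Regular (A ∪ B) ∧
  ∀ S T : Finset (EuclideanSpace ℝ (Fin d)), ↑S ⊆ A → ↑T ⊆ B →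
    S.Nonempty → T.Nonempty → S.card + T.card = d + 1 →
    ∀ s t : EuclideanSpace ℝ (Fin d),
      s ∈ affineSpan ℝ (S : Set (EuclideanSpace ℝ (Fin d))) →
      t ∈ affineSpan ℝ (T : Set (EuclideanSpace ℝ (Fin d))) →
      proj s = proj t → hCoord t < hCoord s

/-- A regular set `P ⊆ ℝ^d` is a convex cup if whenever `p, p₁, …, p_d ∈ P` are distinct points
with `π(p) = ∑ cᵢ π(pᵢ)`, all `cᵢ ∈ (0,1)` and `∑ cᵢ = 1`, then `h(p) < ∑ cᵢ h(pᵢ)`. -/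
def ConvexCup {d : ℕ} (P : Set (EuclideanSpace ℝ (Fin d))) : Prop :=
  Regular P ∧
  ∀ (p : EuclideanSpace ℝ (Fin d)) (q : Fin d → EuclideanSpace ℝ (Fin d)) (c : Fin d → ℝ),
    p ∈ P → (∀ i, q i ∈ P) → Function.Injective q → (∀ i, p ≠ q i) →
    (∀ i, c i ∈ Set.Ioo (0 : ℝ) 1) → ∑ i, c i = 1 →
    proj p = ∑ i, c i • proj (q i) →
    hCoord p < ∑ i, c i * hCoord (q i)

/-- A regular set `P ⊆ ℝ^d` is a convex cap if whenever `p, p₁, …, p_d ∈ P` are distinct points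
with `π(p) = ∑ cᵢ π(pᵢ)`, all `cᵢ ∈ (0,1)` and `∑ cᵢ = 1`, then `h(p) > ∑ cᵢ h(pᵢ)`. -/
def ConvexCap {d : ℕ} (P : Set (EuclideanSpace ℝ (Fin d))) : Prop :=
  Regular P ∧
  ∀ (p : EuclideanSpace ℝ (Fin d)) (q : Fin d → EuclideanSpace ℝ (Fin d)) (c : Fin d → ℝ),
    p ∈ P → (∀ i, q i ∈ P) → Function.Injective q → (∀ i, p ≠ q i) →
    (∀ i, c i ∈ Set.Ioo (0 : ℝ) 1) → ∑ i, c i = 1 →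
    proj p = ∑ i, c i • proj (q i) →
    ∑ i, c i * hCoord (q i) < hCoord p

/-- `∂_π P`, the set of points of `P` whose projection does not lie in the interior of the
convex hull of `π(P)`. -/
def piBoundary {d : ℕ} (P : Set (EuclideanSpace ℝ (Fin d))) : Set (EuclideanSpace ℝ (Fin d)) :=
  {p ∈ P | proj p ∉ interior (convexHull ℝ (proj '' P))}

/-- The rank of `p` in `P`: the number of points of `P` whose first coordinate is at most that
of `p`.  If `P` is sorted as `p₁, p₂, …` by strictly increasing first coordinate, then
`rank P pₜ = t`. -/
def rank {d : ℕ} (P : Set (EuclideanSpace ℝ (Fin d))) (p : EuclideanSpace ℝ (Fin d)) : ℕ :=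
  Set.ncard {q ∈ P | firstCoord q ≤ firstCoord p}

/-- The subset `P_{a,b} = {p_t ∈ P : t ≡ a (mod b)}` of `P` (sorted by first coordinate). -/
def modClass {d : ℕ} (a b : ℕ) (P : Set (EuclideanSpace ℝ (Fin d))) :
    Set (EuclideanSpace ℝ (Fin d)) :=
  {p ∈ P | rank P p % b = a % b}

/-- `d`-oscillators, defined recursively: (O1) any one-point set, and any finite subset of `ℝ¹`,
is an oscillator; (O2) for `d ≥ 2` a finite set `P` with `|P| ≥ 2` is a `d`-oscillator if it is
regular, both `P_{1,2}` and `P_{2,2}` are `d`-oscillators, one of `P_{1,2}`, `P_{2,2}` is high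
above the other, and `π(P)` is a `(d−1)`-oscillator. -/
inductive IsOscillator : (d : ℕ) → Set (EuclideanSpace ℝ (Fin d)) → Prop
  | single {d : ℕ} (p : EuclideanSpace ℝ (Fin d)) : IsOscillator d {p}
  | dimOne (P : Set (EuclideanSpace ℝ (Fin 1))) (hfin : P.Finite) : IsOscillator 1 P
  | step {d : ℕ} (P : Set (EuclideanSpace ℝ (Fin d))) (hd : 2 ≤ d) (hfin : P.Finite)
      (hcard : 2 ≤ P.ncard) (hreg : Regular P)
      (h1 : IsOscillator d (modClass 1 2 P))
      (h2 : IsOscillator d (modClass 2 2 P))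
      (hab : HighAbove (modClass 1 2 P) (modClass 2 2 P) ∨
        HighAbove (modClass 2 2 P) (modClass 1 2 P))
      (hproj : IsOscillator (d - 1) (proj '' P)) : IsOscillator d P

/-- A finite set `P ⊆ ℝ^d` is generic if for any disjoint nonempty subsets `S, T` of `P` with
`|S| + |T| = d + 2`, the affine spans of `S` and `T` intersect in exactly one point. -/
def GenericSet {d : ℕ} (P : Set (EuclideanSpace ℝ (Fin d))) : Prop :=
  ∀ S T : Finset (EuclideanSpace ℝ (Fin d)), ↑S ⊆ P → ↑T ⊆ P → Disjoint S T →
    S.Nonempty → T.Nonempty → S.card + T.card = d + 2 →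
    ∃! x : EuclideanSpace ℝ (Fin d),
      x ∈ affineSpan ℝ (S : Set (EuclideanSpace ℝ (Fin d))) ∧
      x ∈ affineSpan ℝ (T : Set (EuclideanSpace ℝ (Fin d)))

/-- The point of `ℝ^d` obtained from `y ∈ ℝ^{d−1}` by appending a last coordinate `t`. -/
def lift {d : ℕ} (y : EuclideanSpace ℝ (Fin (d - 1))) (t : ℝ) : EuclideanSpace ℝ (Fin d) :=
  WithLp.toLp 2 (fun i : Fin d => if h : (i : ℕ) < d - 1 then y ⟨i, h⟩ else t)

/-- `(N)_ε = ∑_{k≥0} a_k ε^{k+1}` where `N = ∑_{k≥0} a_k 2^k` is the binary expansion of `N`. -/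
def binRep (ε : ℝ) (N : ℕ) : ℝ :=
  ∑ k ∈ Finset.range (N + 1), if N.testBit k then ε ^ (k + 1) else 0

/-- The stretch `str_P(C) = i_k − i_1` of a subset `C` of a `d`-oscillator `P` (sorted by first
coordinate), where `i_1 < … < i_k` are the indices of the elements of `C` in `P`. -/
def stretch {d : ℕ} (P C : Set (EuclideanSpace ℝ (Fin d))) : ℕ :=
  sSup (rank P '' C) - sInf (rank P '' C)

/-- `Δ_d(k)`: the minimum stretch `str_P(C)` over all finite `d`-oscillators `P` and all
`k`-point convex independent subsets `C ⊆ P` (`= ∞` if there are none). -/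
def Delta (d k : ℕ) : ℝ≥0∞ :=
  sInf {s : ℝ≥0∞ | ∃ P C : Set (EuclideanSpace ℝ (Fin d)),
    IsOscillator d P ∧ C ⊆ P ∧ ConvIndep C ∧ C.ncard = k ∧ s = (stretch P C : ℝ≥0∞)}

/-- `Δ'_d(k)`: the minimum stretch `str_P(C)` over all finite `d`-oscillators `P` and all
`k`-point subsets `C ⊆ P` that are convex cups or convex caps (`= ∞` if there are none). -/
def Delta' (d k : ℕ) : ℝ≥0∞ :=
  sInf {s : ℝ≥0∞ | ∃ P C : Set (EuclideanSpace ℝ (Fin d)),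
    IsOscillator d P ∧ C ⊆ P ∧ (ConvexCup C ∨ ConvexCap C) ∧ C.ncard = k ∧
      s = (stretch P C : ℝ≥0∞)}

section Helpers

open Set

variable {d : ℕ}

lemma proj_linear : IsLinearMap ℝ (proj (d := d)) := by
  constructor <;> intros <;> ext <;> simp [proj]

lemma hCoord_eq_coord (hd : 0 < d) (x : EuclideanSpace ℝ (Fin d)) :
    hCoord x = x ⟨d - 1, by omega⟩ := dif_pos hd

lemma hCoord_linear (hd : 0 < d) : IsLinearMap ℝ (hCoord (d := d)) := by
  constructor <;> intros <;> simp only [hCoord_eq_coord hd] <;> rfl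

lemma ext_proj_hCoord (hd : 0 < d) {a b : EuclideanSpace ℝ (Fin d)}
    (h1 : proj a = proj b) (h2 : hCoord a = hCoord b) : a = b := by
  ext i
  rcases lt_or_ge (i : ℕ) (d - 1) with h | h
  · have := congrArg (fun v : EuclideanSpace ℝ (Fin (d - 1)) => v ⟨(i : ℕ), h⟩) h1
    simpa [proj, Fin.castLE, Fin.ext_iff] using this
  · have hi : (i : ℕ) = d - 1 := by omega
    rw [hCoord_eq_coord hd, hCoord_eq_coord hd] at h2
    have : i = (⟨d - 1, by omega⟩ : Fin d) := Fin.ext (by simpa using hi)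
    rw [this]; exact h2

/-- Workhorse: if `p ∈ s` is not in the hull of `s \ {p}` and `p` is a proper convex
combination of two points of the hull of `s`, then both points equal `p`. -/
lemma combo_eq_self {E : Type*} [AddCommGroup E] [Module ℝ E] {s : Finset E} {p x y : E}
    {t : ℝ} (hp : p ∈ s) (hnot : p ∉ convexHull ℝ ((s : Set E) \ {p}))
    (hx : x ∈ convexHull ℝ (s : Set E)) (hy : y ∈ convexHull ℝ (s : Set E))
    (ht : t ∈ Set.Ioo (0 : ℝ) 1) (heq : p = t • x + (1 - t) • y) : x = p ∧ y = p := by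
  classical
  rw [Finset.convexHull_eq] at hx hy
  obtain ⟨α, hα0, hα1, hαx⟩ := hx
  obtain ⟨β, hβ0, hβ1, hβy⟩ := hy
  rw [Finset.centerMass_eq_of_sum_1 _ _ hα1] at hαx
  rw [Finset.centerMass_eq_of_sum_1 _ _ hβ1] at hβy
  set μ : E → ℝ := fun c => t * α c + (1 - t) * β c with hμ
  have hμ0 : ∀ c ∈ s, 0 ≤ μ c := fun c hc =>
    add_nonneg (mul_nonneg ht.1.le (hα0 c hc)) (mul_nonneg (by linarith [ht.2]) (hβ0 c hc))
  have hμ1 : ∑ c ∈ s, μ c = 1 := by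
    simp only [hμ, Finset.sum_add_distrib, ← Finset.mul_sum, hα1, hβ1]; ring
  have hμp : ∑ c ∈ s, μ c • c = p := by
    rw [heq, ← hαx, ← hβy, Finset.smul_sum, Finset.smul_sum, ← Finset.sum_add_distrib]
    refine Finset.sum_congr rfl fun c _ => ?_
    simp only [id, smul_smul, ← add_smul]
    rfl
  have hsplit : ∑ c ∈ s.erase p, μ c • c + μ p • p = p := by
    rw [Finset.sum_erase_add s _ hp]; exact hμp
  have hsum_erase : ∑ c ∈ s.erase p, μ c = 1 - μ p := by
    have := Finset.sum_erase_add s μ hp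
    rw [hμ1] at this; linarith
  have hμp1 : μ p = 1 := by
    by_contra hne
    have hlt : μ p < 1 := by
      rcases lt_or_ge (μ p) 1 with h | h
      · exact h
      · exfalso
        have h0 : ∑ c ∈ s.erase p, μ c ≤ 0 := by rw [hsum_erase]; linarith
        have h0' : ∑ c ∈ s.erase p, μ c = 0 :=
          le_antisymm h0 (Finset.sum_nonneg fun c hc => hμ0 c (Finset.mem_of_mem_erase hc))
        have hμpe : μ p = 1 := by
          have := hsum_erase; rw [h0'] at this; linarith
        exact hne hμpe
    have hpos : 0 < ∑ c ∈ s.erase p, μ c := by rw [hsum_erase]; linarith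
    have hcm : (s.erase p).centerMass μ id = p := by
      rw [Finset.centerMass, hsum_erase]
      have hE : ∑ c ∈ s.erase p, μ c • id c = (1 - μ p) • p := by
        have : ∑ c ∈ s.erase p, μ c • c = p - μ p • p := by
          have := hsplit; linear_combination (norm := module) this
        simpa [sub_smul] using this
      rw [hE, smul_smul, inv_mul_cancel₀ (by linarith), one_smul]
    have hmem : (s.erase p).centerMass μ id ∈ convexHull ℝ ((s.erase p : Finset E) : Set E) :=
      Finset.centerMass_mem_convexHull _
        (fun c hc => hμ0 c (Finset.mem_of_mem_erase hc)) hpos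
        (fun c hc => Finset.mem_coe.2 hc)
    rw [hcm, Finset.coe_erase] at hmem
    exact hnot hmem
  -- μ p = 1 : all other weights vanish
  have hzero : ∀ c ∈ s.erase p, μ c = 0 := by
    have h0' : ∑ c ∈ s.erase p, μ c = 0 := by rw [hsum_erase, hμp1]; ring
    exact (Finset.sum_eq_zero_iff_of_nonneg
      (fun c hc => hμ0 c (Finset.mem_of_mem_erase hc))).1 h0'
  have hαβ : ∀ c ∈ s.erase p, α c = 0 ∧ β c = 0 := by
    intro c hc
    have h := hzero c hc
    have hc' := Finset.mem_of_mem_erase hc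
    have h1 : 0 ≤ t * α c := mul_nonneg ht.1.le (hα0 c hc')
    have h2 : 0 ≤ (1 - t) * β c := mul_nonneg (by linarith [ht.2]) (hβ0 c hc')
    have hta : t * α c = 0 := by simp only [hμ] at h; linarith
    have htb : (1 - t) * β c = 0 := by simp only [hμ] at h; linarith
    exact ⟨by
      rcases mul_eq_zero.1 hta with h | h
      · linarith [ht.1]
      · exact h, by
      rcases mul_eq_zero.1 htb with h | h
      · linarith [ht.2]
      · exact h⟩
  have hαp : α p = 1 := by
    have := Finset.sum_erase_add s α hp
    rw [hα1, Finset.sum_eq_zero (fun c hc => (hαβ c hc).1)] at this; linarith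
  have hβp : β p = 1 := by
    have := Finset.sum_erase_add s β hp
    rw [hβ1, Finset.sum_eq_zero (fun c hc => (hαβ c hc).2)] at this; linarith
  constructor
  · rw [← hαx, ← Finset.sum_erase_add s _ hp,
      Finset.sum_eq_zero (fun c hc => by simp [(hαβ c hc).1]), hαp]
    simp
  · rw [← hβy, ← Finset.sum_erase_add s _ hp,
      Finset.sum_eq_zero (fun c hc => by simp [(hαβ c hc).2]), hβp]
    simp

/-- A point of a finite set lying in the interior of its convex hull lies in the convex hull of
the other points. -/
lemma mem_convexHull_diff_of_mem_interior {E : Type*} [NormedAddCommGroup E] [NormedSpace ℝ E]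
    [Nontrivial E] {s : Set E} (hs : s.Finite) {p : E} (hps : p ∈ s)
    (hint : p ∈ interior (convexHull ℝ s)) : p ∈ convexHull ℝ (s \ {p}) := by
  by_contra hnot
  obtain ⟨ε, hε, hball⟩ := Metric.mem_nhds_iff.1 (mem_interior_iff_mem_nhds.1 hint)
  obtain ⟨v, hv⟩ := exists_ne (0 : E)
  set u : E := ((ε / 2) / ‖v‖) • v with hu
  have hvnorm : 0 < ‖v‖ := norm_pos_iff.2 hv
  have hunorm : ‖u‖ = ε / 2 := by
    rw [hu, norm_smul, norm_div, Real.norm_eq_abs, abs_of_pos (by linarith), norm_norm,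
      div_mul_cancel₀ _ (ne_of_gt hvnorm)]
  have hune : u ≠ 0 := by
    intro h; rw [h, norm_zero] at hunorm; linarith
  have hz : p + u ∈ convexHull ℝ s := hball (by
    simp only [Metric.mem_ball, dist_eq_norm, add_sub_cancel_left]
    rw [hunorm]; linarith)
  have hz' : p - u ∈ convexHull ℝ s := hball (by
    simp only [Metric.mem_ball, dist_eq_norm, sub_sub_cancel_left, norm_neg]
    rw [hunorm]; linarith)
  have heq : p = (1 / 2 : ℝ) • (p + u) + (1 - 1 / 2 : ℝ) • (p - u) := by module
  have := combo_eq_self (s := hs.toFinset) (by simpa using hps)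
    (by rw [Set.Finite.coe_toFinset]; exact hnot)
    (by rw [Set.Finite.coe_toFinset]; exact hz)
    (by rw [Set.Finite.coe_toFinset]; exact hz')
    (by norm_num) heq
  exact hune (by simpa using this.1)

lemma proj_sum_smul {n : ℕ} (c : Fin n → ℝ) (q : Fin n → EuclideanSpace ℝ (Fin d)) :
    proj (∑ i, c i • q i) = ∑ i, c i • proj (q i) := by
  show (IsLinearMap.mk' proj (proj_linear (d := d))) (∑ i, c i • q i) = _
  rw [map_sum]
  simp only [map_smul, IsLinearMap.mk'_apply]

lemma hCoord_sum_smul (hd : 0 < d) {n : ℕ} (c : Fin n → ℝ)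
    (q : Fin n → EuclideanSpace ℝ (Fin d)) :
    hCoord (∑ i, c i • q i) = ∑ i, c i * hCoord (q i) := by
  show (IsLinearMap.mk' hCoord (hCoord_linear hd)) (∑ i, c i • q i) = _
  rw [map_sum]
  simp only [map_smul, IsLinearMap.mk'_apply, smul_eq_mul]

end Helpers

section Main

open Set

variable {d : ℕ}

lemma Regular.mono {C A : Set (EuclideanSpace ℝ (Fin d))} (h : Regular C) (hAC : A ⊆ C) :
    Regular A :=
  ⟨fun i => (h.1 i).mono hAC,
   fun s hs hcard => h.2.1 s (hs.trans (Set.image_mono hAC)) hcard,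
   fun S T hS hT => h.2.2 S T (hS.trans hAC) (hT.trans hAC)⟩

lemma proj_injOn (hd : 2 ≤ d) {C : Set (EuclideanSpace ℝ (Fin d))} (hreg : Regular C) :
    Set.InjOn (proj (d := d)) C := by
  intro a ha b hb hab
  have h0 : (0 : ℕ) < d := by omega
  refine hreg.1 ⟨0, h0⟩ ha hb ?_
  have := congrArg (fun v : EuclideanSpace ℝ (Fin (d - 1)) => v ⟨0, by omega⟩) hab
  simpa [proj, Fin.castLE] using this

/-- If `proj p` is in the interior of the projected hull, the fiber of `p` contains another
point of the hull. -/
lemma exists_fiber_ne (hd : 2 ≤ d) {C : Set (EuclideanSpace ℝ (Fin d))} (hfin : C.Finite)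
    (hci : ConvIndep C) {p : EuclideanSpace ℝ (Fin d)} (hp : p ∈ C)
    (hint : proj p ∈ interior (convexHull ℝ (proj '' C))) :
    ∃ x ∈ convexHull ℝ C, proj x = proj p ∧ x ≠ p := by
  haveI : Nonempty (Fin (d - 1)) := ⟨⟨0, by omega⟩⟩
  haveI : Nontrivial (EuclideanSpace ℝ (Fin (d - 1))) := by
    refine ⟨EuclideanSpace.single ⟨0, by omega⟩ (1 : ℝ), 0, ?_⟩
    intro h
    have := congrArg (fun v : EuclideanSpace ℝ (Fin (d - 1)) => v ⟨0, by omega⟩) h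
    simp [EuclideanSpace.single] at this
  have h1 : proj p ∈ convexHull ℝ ((proj '' C) \ {proj p}) :=
    mem_convexHull_diff_of_mem_interior (hfin.image _) ⟨p, hp, rfl⟩ hint
  have h2 : (proj '' C) \ {proj p} ⊆ proj '' (C \ {p}) := by
    rintro _ ⟨⟨q, hq, rfl⟩, hne⟩
    exact ⟨q, ⟨hq, by rintro rfl; exact hne rfl⟩, rfl⟩
  have h3 : proj p ∈ convexHull ℝ (proj '' (C \ {p})) := convexHull_mono h2 h1
  rw [← proj_linear.image_convexHull] at h3
  obtain ⟨x, hx, hxp⟩ := h3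
  exact ⟨x, convexHull_mono Set.diff_subset hx, hxp, fun h => (hci.2 p hp) (h ▸ hx)⟩

/-- Every point of a convex independent set is either a fiber-maximum or a fiber-minimum. -/
lemma fiber_max_or_min (hd : 2 ≤ d) {C : Set (EuclideanSpace ℝ (Fin d))} (hfin : C.Finite)
    (hci : ConvIndep C) {p : EuclideanSpace ℝ (Fin d)} (hp : p ∈ C) :
    (∀ x ∈ convexHull ℝ C, proj x = proj p → hCoord x ≤ hCoord p) ∨
    (∀ x ∈ convexHull ℝ C, proj x = proj p → hCoord p ≤ hCoord x) := by
  have h0 : (0 : ℕ) < d := by omega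
  by_contra h
  push_neg at h
  obtain ⟨⟨x, hxK, hxp, hx⟩, ⟨y, hyK, hyp, hy⟩⟩ := h
  -- hCoord y < hCoord p < hCoord x
  set t : ℝ := (hCoord p - hCoord y) / (hCoord x - hCoord y) with htdef
  have hxy : hCoord y < hCoord x := hy.trans hx
  have ht : t ∈ Set.Ioo (0 : ℝ) 1 := by
    constructor
    · apply div_pos <;> linarith
    · rw [div_lt_one (by linarith)]; linarith
  have heq : p = t • x + (1 - t) • y := by
    refine (ext_proj_hCoord h0 ?_ ?_).symm
    · rw [proj_linear.map_add, proj_linear.map_smul, proj_linear.map_smul, hxp, hyp]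
      module
    · rw [(hCoord_linear h0).map_add, (hCoord_linear h0).map_smul,
        (hCoord_linear h0).map_smul, smul_eq_mul, smul_eq_mul]
      have h1 : t * (hCoord x - hCoord y) = hCoord p - hCoord y := by
        rw [htdef, div_mul_cancel₀ _ (by linarith : hCoord x - hCoord y ≠ 0)]
      linear_combination h1
  have := combo_eq_self (s := hfin.toFinset) (by simpa using hp)
    (by rw [Set.Finite.coe_toFinset]; exact hci.2 p hp)
    (by rw [Set.Finite.coe_toFinset]; exact hxK)
    (by rw [Set.Finite.coe_toFinset]; exact hyK) ht heq
  rw [this.1] at hx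
  exact lt_irrefl _ hx

/-- If `p` is the apex of a cap/cup configuration, its projection is interior. -/
lemma apex_mem_interior (hd : 2 ≤ d) {C : Set (EuclideanSpace ℝ (Fin d))} (hreg : Regular C)
    {p : EuclideanSpace ℝ (Fin d)} {q : Fin d → EuclideanSpace ℝ (Fin d)} {c : Fin d → ℝ}
    (hq : ∀ i, q i ∈ C) (hqinj : Function.Injective q)
    (hc : ∀ i, c i ∈ Set.Ioo (0 : ℝ) 1) (hc1 : ∑ i, c i = 1)
    (hcomb : proj p = ∑ i, c i • proj (q i)) :
    proj p ∈ interior (convexHull ℝ (proj '' C)) := by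
  classical
  set pq : Fin d → EuclideanSpace ℝ (Fin (d - 1)) := fun i => proj (q i) with hpq
  have hpqinj : Function.Injective pq := by
    intro i j hij
    exact hqinj (proj_injOn hd hreg (hq i) (hq j) hij)
  set s : Finset (EuclideanSpace ℝ (Fin (d - 1))) := Finset.image pq Finset.univ with hs
  have hscard : s.card = (d - 1) + 1 := by
    rw [hs, Finset.card_image_of_injective _ hpqinj, Finset.card_univ, Fintype.card_fin]
    omega
  have hssub : (s : Set (EuclideanSpace ℝ (Fin (d - 1)))) ⊆ proj '' C := by
    intro x hx
    simp only [hs, Finset.coe_image, Finset.coe_univ, Set.image_univ] at hx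
    obtain ⟨i, rfl⟩ := hx
    exact ⟨q i, hq i, rfl⟩
  have hindsub : AffineIndependent ℝ (fun x : s => (x : EuclideanSpace ℝ (Fin (d - 1)))) :=
    hreg.2.1 s hssub hscard
  have hind : AffineIndependent ℝ pq := by
    have hmem : ∀ i, pq i ∈ s := fun i => by
      rw [hs]; exact Finset.mem_image_of_mem _ (Finset.mem_univ i)
    have : pq = (fun x : s => (x : EuclideanSpace ℝ (Fin (d - 1)))) ∘
        (fun i => (⟨pq i, hmem i⟩ : s)) := rfl
    rw [this]
    exact hindsub.comp_embedding (⟨fun i => ⟨pq i, hmem i⟩,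
      fun i j hij => hpqinj (by simpa [Subtype.ext_iff] using hij)⟩ : Fin d ↪ s)
  have htot : affineSpan ℝ (Set.range pq) = ⊤ := by
    rw [hind.affineSpan_eq_top_iff_card_eq_finrank_add_one, Fintype.card_fin,
      finrank_euclideanSpace_fin]
    omega
  set b : AffineBasis (Fin d) ℝ (EuclideanSpace ℝ (Fin (d - 1))) := ⟨pq, hind, htot⟩ with hb
  have hcombB : proj p = Finset.univ.affineCombination ℝ pq c := by
    rw [Finset.affineCombination_eq_linear_combination _ _ _ hc1, hcomb]
  have hcoord : ∀ i, b.coord i (proj p) = c i := by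
    intro i
    rw [hcombB]
    exact b.coord_apply_combination_of_mem (Finset.mem_univ i) hc1
  have hmem : proj p ∈ interior (convexHull ℝ (Set.range b)) := by
    rw [b.interior_convexHull]
    intro i
    rw [hcoord i]
    exact (hc i).1
  have hrange : Set.range (b : Fin d → EuclideanSpace ℝ (Fin (d - 1))) ⊆ proj '' C := by
    rintro _ ⟨i, rfl⟩
    exact ⟨q i, hq i, rfl⟩
  exact interior_mono (convexHull_mono hrange) hmem

end Main


theorem stmt6 (d : ℕ) (hd : 2 ≤ d) (C : Set (EuclideanSpace ℝ (Fin d))) (hfin : C.Finite)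
    (hreg : Regular C) (hci : ConvIndep C) :
    ∃ CA CB : Set (EuclideanSpace ℝ (Fin d)), CA ⊆ C ∧ CB ⊆ C ∧
      ConvexCap CA ∧ ConvexCup CB ∧ CA ∪ CB = C ∧ CA ∩ CB = piBoundary C := by
  classical
  have h0 : (0 : ℕ) < d := by omega
  set K := convexHull ℝ C with hK
  set CA : Set (EuclideanSpace ℝ (Fin d)) :=
    {p ∈ C | ∀ x ∈ K, proj x = proj p → hCoord x ≤ hCoord p} ∪ piBoundary C with hCA
  set CB : Set (EuclideanSpace ℝ (Fin d)) :=
    {p ∈ C | ∀ x ∈ K, proj x = proj p → hCoord p ≤ hCoord x} ∪ piBoundary C with hCB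
  have hbd : piBoundary C ⊆ C := fun p hp => hp.1
  have hASub : CA ⊆ C := by
    rintro p (hp | hp)
    · exact hp.1
    · exact hbd hp
  have hBSub : CB ⊆ C := by
    rintro p (hp | hp)
    · exact hp.1
    · exact hbd hp
  refine ⟨CA, CB, hASub, hBSub, ?_, ?_, ?_, ?_⟩
  -- ConvexCap CA
  · refine ⟨hreg.mono hASub, ?_⟩
    intro p q c hp hq hqinj hpq hc hc1 hcomb
    have hpC : p ∈ C := hASub hp
    have hqC : ∀ i, q i ∈ C := fun i => hASub (hq i)
    have hint : proj p ∈ interior (convexHull ℝ (proj '' C)) :=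
      apex_mem_interior hd hreg hqC hqinj hc hc1 hcomb
    have hmax : ∀ x ∈ K, proj x = proj p → hCoord x ≤ hCoord p := by
      rcases hp with hp | hp
      · exact hp.2
      · exact absurd hint hp.2
    set x : EuclideanSpace ℝ (Fin d) := ∑ i, c i • q i with hx
    have hxK' : x ∈ convexHull ℝ (C \ {p}) := by
      have : Finset.univ.centerMass c q = x := by
        rw [Finset.centerMass_eq_of_sum_1 _ _ hc1]
      rw [← this]
      exact Finset.centerMass_mem_convexHull _ (fun i _ => (hc i).1.le)
        (by rw [hc1]; norm_num)
        (fun i _ => ⟨hqC i, fun h => hpq i (Set.mem_singleton_iff.1 h).symm⟩)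
    have hxK : x ∈ K := convexHull_mono Set.diff_subset hxK'
    have hprojx : proj x = proj p := by
      rw [hx, proj_sum_smul c q]
      exact hcomb.symm
    have hhx : hCoord x = ∑ i, c i * hCoord (q i) := by
      rw [hx, hCoord_sum_smul h0 c q]
    have hne : x ≠ p := fun h => (hci.2 p hpC) (h ▸ hxK')
    have hle : hCoord x ≤ hCoord p := hmax x hxK hprojx
    have hlt : hCoord x < hCoord p := by
      rcases lt_or_eq_of_le hle with h | h
      · exact h
      · exact absurd (ext_proj_hCoord h0 hprojx h) hne
    rw [← hhx]
    exact hlt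
  -- ConvexCup CB
  · refine ⟨hreg.mono hBSub, ?_⟩
    intro p q c hp hq hqinj hpq hc hc1 hcomb
    have hpC : p ∈ C := hBSub hp
    have hqC : ∀ i, q i ∈ C := fun i => hBSub (hq i)
    have hint : proj p ∈ interior (convexHull ℝ (proj '' C)) :=
      apex_mem_interior hd hreg hqC hqinj hc hc1 hcomb
    have hmin : ∀ x ∈ K, proj x = proj p → hCoord p ≤ hCoord x := by
      rcases hp with hp | hp
      · exact hp.2
      · exact absurd hint hp.2
    set x : EuclideanSpace ℝ (Fin d) := ∑ i, c i • q i with hx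
    have hxK' : x ∈ convexHull ℝ (C \ {p}) := by
      have : Finset.univ.centerMass c q = x := by
        rw [Finset.centerMass_eq_of_sum_1 _ _ hc1]
      rw [← this]
      exact Finset.centerMass_mem_convexHull _ (fun i _ => (hc i).1.le)
        (by rw [hc1]; norm_num)
        (fun i _ => ⟨hqC i, fun h => hpq i (Set.mem_singleton_iff.1 h).symm⟩)
    have hxK : x ∈ K := convexHull_mono Set.diff_subset hxK'
    have hprojx : proj x = proj p := by
      rw [hx, proj_sum_smul c q]
      exact hcomb.symm
    have hhx : hCoord x = ∑ i, c i * hCoord (q i) := by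
      rw [hx, hCoord_sum_smul h0 c q]
    have hne : x ≠ p := fun h => (hci.2 p hpC) (h ▸ hxK')
    have hle : hCoord p ≤ hCoord x := hmin x hxK hprojx
    have hlt : hCoord p < hCoord x := by
      rcases lt_or_eq_of_le hle with h | h
      · exact h
      · exact absurd (ext_proj_hCoord h0 hprojx h.symm) hne
    rw [← hhx]
    exact hlt
  -- CA ∪ CB = C
  · apply Set.Subset.antisymm
    · exact Set.union_subset hASub hBSub
    · intro p hpC
      rcases fiber_max_or_min hd hfin hci hpC with h | h
      · exact Or.inl (Or.inl ⟨hpC, h⟩)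
      · exact Or.inr (Or.inl ⟨hpC, h⟩)
  -- CA ∩ CB = piBoundary C
  · apply Set.Subset.antisymm
    · rintro p ⟨hpA, hpB⟩
      by_cases hbdp : p ∈ piBoundary C
      · exact hbdp
      exfalso
      have hpC : p ∈ C := hASub hpA
      have hint : proj p ∈ interior (convexHull ℝ (proj '' C)) := by
        by_contra h
        exact hbdp ⟨hpC, h⟩
      have hmax : ∀ x ∈ K, proj x = proj p → hCoord x ≤ hCoord p := by
        rcases hpA with h | h
        · exact h.2
        · exact absurd h hbdp
      have hmin : ∀ x ∈ K, proj x = proj p → hCoord p ≤ hCoord x := by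
        rcases hpB with h | h
        · exact h.2
        · exact absurd h hbdp
      obtain ⟨x, hxK, hxp, hxne⟩ := exists_fiber_ne hd hfin hci hpC hint
      exact hxne (ext_proj_hCoord h0 hxp (le_antisymm (hmax x hxK hxp) (hmin x hxK hxp)))
    · intro p hp
      exact ⟨Or.inr hp, Or.inr hp⟩
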